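/- arXiv:math/9806075 — 3 statements merged into one kernel-verified Lean document; each statement's English description precedes it below -/
import Mathlib

section
/- Let K be a prime, ζ = exp(2πi/K), and let m, n ∈ ℤ with n not divisible by K, and let n* ∈ ℤ satisfy n·n* ≡ 1 (mod K). For k ∈ ℕ set c_k = m(m−n)(m−2n)⋯(m−(k−1)n)/(nᵏ·k!) ∈ ℚ. Then for every N ≥ 0, every M ≥ (N+1)(K−1), and every choice of integers b₀, …, b_M with v_K(b_k − c_k) ≥ N+1 for all 0 ≤ k ≤ M, one has ζ^{m·n*} − Σ_{k=0}^{M} b_k·(ζ−1)^k ∈ K^{N+1}·ℤ[ζ]. -/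
open Finset

/-- In `ℤ[ζ]`, `(ζ-1)^(K-1)` is `K` times an element of `ℤ[ζ]`. -/
lemma aux_unit_pow {K : ℕ} (hK : K.Prime) {ζ : ℂ} (hζ : IsPrimitiveRoot ζ K) :
    ∃ u ∈ Subring.closure {ζ}, (ζ - 1) ^ (K - 1) = (K : ℂ) * u := by
  haveI : Fact K.Prime := ⟨hK⟩
  haveI : NeZero K := ⟨hK.ne_zero⟩
  have hζR : ζ ∈ Subring.closure ({ζ} : Set ℂ) := Subring.subset_closure rfl
  have hKeval : ((K : ℂ)) = ∏ μ ∈ primitiveRoots K ℂ, (1 - μ) := by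
    have h1 : Polynomial.cyclotomic K ℂ
        = ∏ μ ∈ primitiveRoots K ℂ, (Polynomial.X - Polynomial.C μ) :=
      Polynomial.cyclotomic_eq_prod_X_sub_primitiveRoots hζ
    have h2 := Polynomial.eval_one_cyclotomic_prime (R := ℂ) (p := K)
    rw [h1] at h2
    simpa [Polynomial.eval_prod] using h2.symm
  have hfac : ∀ μ ∈ primitiveRoots K ℂ,
      ∃ g ∈ Subring.closure ({ζ} : Set ℂ), (ζ - 1) = (1 - μ) * g := by
    intro μ hμ
    have hμprim : IsPrimitiveRoot μ K := isPrimitiveRoot_of_mem_primitiveRoots hμ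
    obtain ⟨i, hiK, hi⟩ := hζ.eq_pow_of_pow_eq_one hμprim.pow_eq_one
    have hi0 : i ≠ 0 := by
      rintro rfl
      exact hμprim.ne_one hK.one_lt (by simpa using hi.symm)
    have hcop : Nat.Coprime i K :=
      ((Nat.Prime.coprime_iff_not_dvd hK).mpr
        (Nat.not_dvd_of_pos_of_lt (Nat.pos_of_ne_zero hi0) hiK)).symm
    obtain ⟨j, -, hj⟩ := Nat.exists_mul_mod_eq_one_of_coprime hcop hK.one_lt
    have hμj : μ ^ j = ζ := by
      rw [← hi, ← pow_mul]
      obtain ⟨t, ht⟩ : ∃ t, i * j = 1 + K * t := by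
        refine ⟨i * j / K, ?_⟩
        conv_lhs => rw [← Nat.mod_add_div (i * j) K, hj]
      rw [ht, pow_add, pow_one, pow_mul, hζ.pow_eq_one, one_pow, mul_one]
    have hgeo := geom_sum_mul μ j
    rw [hμj] at hgeo
    refine ⟨-(∑ t ∈ range j, μ ^ t), ?_, ?_⟩
    · refine neg_mem (Subring.sum_mem _ fun t _ => pow_mem ?_ t)
      rw [← hi]; exact pow_mem hζR i
    · rw [← hgeo]; ring
  choose g hgR hgeq using hfac
  refine ⟨∏ μ ∈ (primitiveRoots K ℂ).attach, g μ.1 μ.2,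
    Subring.prod_mem _ fun μ _ => hgR μ.1 μ.2, ?_⟩
  have hcard : #(primitiveRoots K ℂ) = K - 1 := by
    rw [hζ.card_primitiveRoots, Nat.totient_prime hK]
  calc (ζ - 1) ^ (K - 1) = ∏ _μ ∈ (primitiveRoots K ℂ).attach, (ζ - 1) := by
        rw [prod_const, card_attach, hcard]
    _ = ∏ μ ∈ (primitiveRoots K ℂ).attach, ((1 - μ.1) * g μ.1 μ.2) :=
        prod_congr rfl fun μ _ => hgeq μ.1 μ.2
    _ = (∏ μ ∈ (primitiveRoots K ℂ).attach, (1 - μ.1)) *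
        ∏ μ ∈ (primitiveRoots K ℂ).attach, g μ.1 μ.2 := prod_mul_distrib
    _ = (K : ℂ) * ∏ μ ∈ (primitiveRoots K ℂ).attach, g μ.1 μ.2 := by
        rw [Finset.prod_attach (primitiveRoots K ℂ) (fun μ => 1 - μ), ← hKeval]


lemma aux_key_dvd (K : ℕ) (hK : K.Prime) (n m : ℤ) (hn : ¬ (K:ℤ) ∣ n)
    (N M k : ℕ) (hk : k ≤ M) (s : ℕ) (hsk : k ≤ s)
    (hcong : (K:ℤ) ^ (N+1+M) ∣ n * s - m) (bk : ℤ) (c : ℚ)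
    (hc : c = (∏ j ∈ Finset.range k, ((m:ℚ) - (j:ℚ) * (n:ℚ))) / ((n:ℚ)^k * (k.factorial : ℚ)))
    (hb : (bk:ℚ) - c = 0 ∨ ((N:ℤ) + 1 ≤ padicValRat K ((bk:ℚ) - c))) :
    (K:ℤ)^(N+1) ∣ (s.choose k : ℤ) - bk := by
  haveI : Fact K.Prime := ⟨hK⟩
  have hnZ : n ≠ 0 := fun h => hn (by simp [h])
  have hn0 : (n:ℚ) ≠ 0 := Int.cast_ne_zero.mpr hnZ
  have hfac0 : (k.factorial : ℚ) ≠ 0 := Nat.cast_ne_zero.mpr k.factorial_ne_zero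
  have hden0 : (n:ℚ)^k * (k.factorial : ℚ) ≠ 0 := mul_ne_zero (pow_ne_zero _ hn0) hfac0
  set v := padicValNat K (k.factorial) with hvdef
  have hvk : v ≤ M := by
    have h1 := sub_one_mul_padicValNat_factorial (p := K) k
    have h2 : (K-1) * v = k - (K.digits k).sum := h1
    have h3 : v ≤ (K-1) * v := Nat.le_mul_of_pos_left v (by have := hK.two_le; omega)
    omega
  -- the two integer products
  set P : ℤ := ∏ j ∈ range k, (m - (j:ℤ) * n) with hPdef
  set Q : ℤ := ∏ j ∈ range k, ((s:ℤ) - (j:ℤ)) with hQdef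
  have hQ : Q = (k.factorial : ℤ) * (s.choose k : ℤ) := by
    have h1 : Q = ((s.descFactorial k : ℕ) : ℤ) := by
      rw [hQdef, Nat.descFactorial_eq_prod_range, Nat.cast_prod]
      refine prod_congr rfl fun j hj => ?_
      have hjs : j ≤ s := le_trans (le_of_lt (mem_range.mp hj)) hsk
      rw [Nat.cast_sub hjs]
    rw [h1, Nat.descFactorial_eq_factorial_mul_choose]
    push_cast; ring
  have hPQ : (K:ℤ)^(N+1+M) ∣ P - n^k * Q := by
    have hcast : ((K:ℤ))^(N+1+M) = ((K^(N+1+M) : ℕ) : ℤ) := by push_cast; ring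
    rw [hcast, ← ZMod.intCast_zmod_eq_zero_iff_dvd]
    have hm : (m : ZMod (K^(N+1+M))) = (n : ZMod (K^(N+1+M))) * (s : ℕ) := by
      have := (ZMod.intCast_zmod_eq_zero_iff_dvd (n * s - m) (K^(N+1+M))).mpr
        (by rw [← hcast] at *; exact_mod_cast hcong)
      push_cast at this ⊢
      linear_combination -this
    push_cast [hPdef, hQdef]
    rw [hm]
    have : ∏ j ∈ range k, ((n : ZMod (K^(N+1+M))) * (s:ℕ) - (j:ℕ) * n)
        = ∏ j ∈ range k, ((n : ZMod (K^(N+1+M))) * ((s:ℕ) - (j:ℕ))) :=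
      prod_congr rfl fun j _ => by ring
    rw [this, prod_mul_distrib, prod_const, card_range]
    ring
  -- the c-related divisibility
  set Y : ℤ := P - bk * (n^k * (k.factorial : ℤ)) with hYdef
  have hcY : (Y : ℚ) = -(((bk:ℚ) - c) * ((n:ℚ)^k * (k.factorial : ℚ))) := by
    rw [hYdef, hc]
    push_cast [hPdef]
    field_simp
    rw [prod_congr rfl fun (x : ℕ) _ => show (m:ℚ) - n * x = m - x * n by ring]
    ring
  have hY : (K:ℤ)^(N+1+v) ∣ Y := by
    by_cases hY0 : Y = 0
    · simp [hY0]
    rcases hb with h | h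
    · exfalso
      rw [h, zero_mul, neg_zero] at hcY
      exact hY0 (by exact_mod_cast hcY)
    have hbc0 : (bk:ℚ) - c ≠ 0 := by
      intro h0
      rw [h0, zero_mul, neg_zero] at hcY
      exact hY0 (by exact_mod_cast hcY)
    have hval : padicValRat K ((n:ℚ)^k * (k.factorial : ℚ)) = v := by
      rw [padicValRat.mul (pow_ne_zero _ hn0) hfac0, padicValRat.pow (n:ℚ)]
      have h1 : padicValRat K (n:ℚ) = 0 := by
        rw [padicValRat.of_int, padicValInt.eq_zero_of_not_dvd hn]; simp
      have h2 : padicValRat K ((k.factorial : ℕ) : ℚ) = (v : ℤ) := by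
        rw [padicValRat.of_nat]
      rw [h1, h2]; ring
    have hvy : (padicValInt K Y : ℤ) = padicValRat K ((bk:ℚ) - c) + v := by
      rw [← padicValRat.of_int, hcY, padicValRat.neg,
        padicValRat.mul hbc0 hden0, hval]
    rw [padicValInt_dvd_iff]
    right
    omega
  set d : ℤ := (s.choose k : ℤ) - bk with hddef
  have hcomb : d * (n^k * (k.factorial : ℤ)) = -(P - n^k * Q) + Y := by
    rw [hddef, hYdef, hQ]; ring
  have hdvd2 : (K:ℤ)^(N+1+v) ∣ d * (n^k * (k.factorial : ℤ)) := by
    rw [hcomb]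
    exact dvd_add (dvd_neg.mpr (dvd_trans (pow_dvd_pow _ (by omega)) hPQ)) hY
  by_cases hd0 : d = 0
  · rw [hd0]; exact dvd_zero _
  have hnk0 : (n:ℤ)^k * (k.factorial : ℤ) ≠ 0 := by
    exact mul_ne_zero (pow_ne_zero _ hnZ) (Int.natCast_ne_zero.mpr k.factorial_ne_zero)
  have hmulval : padicValInt K (d * (n^k * (k.factorial : ℤ))) = padicValInt K d + v := by
    rw [padicValInt.mul hd0 hnk0]
    congr 1
    rw [padicValInt.mul (pow_ne_zero _ hnZ)
      (Int.natCast_ne_zero.mpr k.factorial_ne_zero)]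
    have h1 : padicValInt K (n^k) = 0 := by
      apply padicValInt.eq_zero_of_not_dvd
      intro h
      exact hn (Int.Prime.dvd_pow' (by exact_mod_cast hK) h)
    rw [h1, zero_add]
    exact padicValInt.of_nat
  have := (padicValInt_dvd_iff (p := K) (N+1+v) (d * (n^k * (k.factorial : ℤ)))).mp hdvd2
  rcases this with h | h
  · exact absurd h (mul_ne_zero hd0 hnk0)
  rw [hmulval] at h
  exact (padicValInt_dvd_iff (p := K) (N+1) d).mpr (Or.inr (by omega))


lemma aux_sum_scale (R : Subring ℂ) (C : ℂ) (F : Finset ℕ) (f : ℕ → ℂ)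
    (h : ∀ k ∈ F, ∃ x ∈ R, f k = C * x) :
    ∃ x ∈ R, ∑ k ∈ F, f k = C * x := by
  choose g hg hfg using h
  refine ⟨∑ k ∈ F.attach, g k.1 k.2, Subring.sum_mem _ fun k _ => hg k.1 k.2, ?_⟩
  rw [Finset.mul_sum, ← Finset.sum_attach F f]
  exact Finset.sum_congr rfl fun k _ => by rw [hfg k.1 k.2]

/-- Let `K` be a prime, `ζ = exp(2πi/K)`, `m, n ∈ ℤ` with `K ∤ n`, and
`n* ∈ ℤ` with `n·n* ≡ 1 (mod K)`.  Let `c_k = m(m−n)⋯(m−(k−1)n)/(nᵏ·k!) ∈ ℚ`.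
Then for every `N ≥ 0`, every `M ≥ (N+1)(K−1)`, and every choice of integers
`b₀, …, b_M` with `v_K(b_k − c_k) ≥ N+1` for `0 ≤ k ≤ M` (with the convention
`v_K(0) = ∞`), one has `ζ^{m·n*} − ∑_{k=0}^{M} b_k (ζ−1)^k ∈ K^{N+1}·ℤ[ζ]`. -/
theorem stmt3 (K : ℕ) (hK : K.Prime)
    (ζ : ℂ) (hζ : ζ = Complex.exp (2 * Real.pi * Complex.I / K))
    (m n nstar : ℤ) (hn : ¬ (K : ℤ) ∣ n) (hnstar : n * nstar ≡ 1 [ZMOD (K : ℤ)])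
    (c : ℕ → ℚ)
    (hc : ∀ k : ℕ, c k = (∏ j ∈ Finset.range k, ((m : ℚ) - (j : ℚ) * (n : ℚ))) /
        ((n : ℚ) ^ k * (k.factorial : ℚ)))
    (N M : ℕ) (hM : (N + 1) * (K - 1) ≤ M)
    (b : ℕ → ℤ)
    (hb : ∀ k ≤ M, ((b k : ℚ) - c k = 0) ∨ ((N : ℤ) + 1 ≤ padicValRat K ((b k : ℚ) - c k))) :
    ∃ x ∈ Subring.closure {ζ},
      ζ ^ (m * nstar) - ∑ k ∈ Finset.range (M + 1), (b k : ℂ) * (ζ - 1) ^ k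
        = (K : ℂ) ^ (N + 1) * x := by
  haveI : Fact K.Prime := ⟨hK⟩
  have hK2 : 2 ≤ K := hK.two_le
  have hζprim : IsPrimitiveRoot ζ K := hζ ▸ Complex.isPrimitiveRoot_exp K (by omega)
  have hζ0 : ζ ≠ 0 := hζprim.ne_zero (by omega)
  have hζR : ζ ∈ Subring.closure ({ζ} : Set ℂ) := Subring.subset_closure rfl
  have hlamR : ζ - 1 ∈ Subring.closure ({ζ} : Set ℂ) := sub_mem hζR (one_mem _)
  -- choose s
  set T : ℕ := N + 1 + M with hT
  have hKT : Prime ((K:ℤ)) := Nat.prime_iff_prime_int.mp hK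
  have hcop : IsCoprime ((K:ℤ)^T) n := (IsCoprime.pow_left ((hKT.coprime_iff_not_dvd).mpr hn))
  obtain ⟨w, u, hwu⟩ := hcop  -- w * K^T + u * n = 1
  set s0 : ℤ := u * m with hs0
  have hcong0 : ((K:ℤ))^T ∣ n * s0 - m := by
    refine ⟨-(m * w), ?_⟩
    have : n * s0 - m = -(m * (w * (K:ℤ)^T)) := by
      rw [hs0]; linear_combination m * hwu
    rw [this]; ring
  have hq0 : (0:ℤ) < (K:ℤ)^T := by positivity
  set s : ℕ := (s0 % ((K:ℤ)^T)).toNat + K^T * (M + 1) with hs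
  have hscast : (s : ℤ) = s0 % ((K:ℤ)^T) + (K:ℤ)^T * (M + 1) := by
    rw [hs]; push_cast [Int.toNat_of_nonneg (Int.emod_nonneg s0 (ne_of_gt hq0))]; ring
  have hdvds : ((K:ℤ))^T ∣ (s:ℤ) - s0 := by
    refine ⟨(M+1) - s0 / ((K:ℤ)^T), ?_⟩
    have h := Int.emod_add_mul_ediv s0 ((K:ℤ)^T)
    rw [hscast]
    linear_combination h
  have hcong : ((K:ℤ))^T ∣ n * (s:ℤ) - m := by
    obtain ⟨a, ha⟩ := hcong0
    obtain ⟨e, he⟩ := hdvds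
    exact ⟨a + n * e, by linear_combination ha + n * he⟩
  have hMs : M + 1 ≤ s := by
    have h1 : 1 ≤ K^T := Nat.one_le_pow _ _ (by omega)
    calc M + 1 ≤ K^T * (M+1) := Nat.le_mul_of_pos_left _ (by omega)
      _ ≤ s := Nat.le_add_left _ _
  -- ζ^(m nstar) = ζ^s
  have hzpow : ζ ^ (m * nstar) = ζ ^ s := by
    have hK1 : (K:ℤ) ∣ n * (s:ℤ) - m :=
      dvd_trans (dvd_pow_self ((K:ℤ)) (by omega : T ≠ 0)) hcong
    have hK2' : (K:ℤ) ∣ n * nstar - 1 := (Int.ModEq.dvd hnstar.symm)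
    have hdvd : (K:ℤ) ∣ m * nstar - s := by
      obtain ⟨a, ha⟩ := hK1; obtain ⟨e, hei⟩ := hK2'
      refine ⟨s * e - nstar * a, ?_⟩
      linear_combination (s:ℤ) * hei - nstar * ha
    obtain ⟨t, ht⟩ : ∃ t, m * nstar = (s:ℤ) + (K:ℤ) * t := by
      obtain ⟨t, ht⟩ := hdvd; exact ⟨t, by linarith⟩
    rw [ht, zpow_add₀ hζ0, zpow_natCast, zpow_mul, zpow_natCast, hζprim.pow_eq_one,
      one_zpow, mul_one]
  -- binomial expansion
  have hbin : ζ ^ s = ∑ k ∈ range (s+1), (s.choose k : ℂ) * (ζ - 1) ^ k := by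
    conv_lhs => rw [show ζ = (ζ - 1) + 1 by ring]
    rw [add_pow]
    exact Finset.sum_congr rfl fun k _ => by rw [one_pow]; ring
  -- split the binomial sum
  have hsplit : ∑ k ∈ range (s+1), (s.choose k : ℂ) * (ζ - 1) ^ k
      = ∑ k ∈ range (M+1), (s.choose k : ℂ) * (ζ - 1) ^ k
        + ∑ k ∈ Ico (M+1) (s+1), (s.choose k : ℂ) * (ζ - 1) ^ k := by
    rw [range_eq_Ico, ← Finset.sum_Ico_consecutive _ (Nat.zero_le _) (by omega : M+1 ≤ s+1),
      ← range_eq_Ico]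
  have hmain : ζ ^ (m * nstar) - ∑ k ∈ range (M + 1), (b k : ℂ) * (ζ - 1) ^ k
      = ∑ k ∈ range (M+1), ((s.choose k : ℂ) - b k) * (ζ - 1) ^ k
        + ∑ k ∈ Ico (M+1) (s+1), (s.choose k : ℂ) * (ζ - 1) ^ k := by
    rw [hzpow, hbin, hsplit, add_sub_right_comm]
    congr 1
    rw [← Finset.sum_sub_distrib]
    exact sum_congr rfl fun k _ => by ring
  rw [hmain]
  obtain ⟨uu, huR, huu⟩ := aux_unit_pow hK hζprim
  have hhead : ∀ k ∈ range (M+1), ∃ x ∈ Subring.closure ({ζ} : Set ℂ),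
      ((s.choose k : ℂ) - (b k : ℂ)) * (ζ - 1)^k = (K:ℂ)^(N+1) * x := by
    intro k hk
    have hkM : k ≤ M := by simpa [Nat.lt_succ_iff] using mem_range.mp hk
    obtain ⟨e, he⟩ := aux_key_dvd K hK n m hn N M k hkM s (by omega) hcong (b k) (c k)
      (hc k) (hb k hkM)
    refine ⟨(e:ℂ) * (ζ-1)^k, mul_mem (intCast_mem _ e) (pow_mem hlamR k), ?_⟩
    have hcast : ((s.choose k : ℂ) - (b k : ℂ)) = (K:ℂ)^(N+1) * (e:ℂ) := by
      have := congrArg (fun z : ℤ => (z:ℂ)) he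
      push_cast at this
      exact this
    rw [hcast]; ring
  have htail : ∀ k ∈ Ico (M+1) (s+1), ∃ x ∈ Subring.closure ({ζ} : Set ℂ),
      (s.choose k : ℂ) * (ζ - 1)^k = (K:ℂ)^(N+1) * x := by
    intro k hk
    have hk1 : (N+1)*(K-1) ≤ k := le_trans hM (by have := (mem_Ico.mp hk).1; omega)
    refine ⟨(s.choose k : ℂ) * (uu^(N+1) * (ζ-1)^(k - (N+1)*(K-1))),
      mul_mem (natCast_mem _ _) (mul_mem (pow_mem huR _) (pow_mem hlamR _)), ?_⟩
    have hsplitpow : (ζ-1)^k = ((ζ-1)^(K-1))^(N+1) * (ζ-1)^(k - (N+1)*(K-1)) := by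
      rw [← pow_mul, ← pow_add]
      congr 1
      have h2 : (K-1)*(N+1) = (N+1)*(K-1) := Nat.mul_comm _ _
      omega
    rw [hsplitpow, huu, mul_pow]
    ring
  obtain ⟨x1, hx1R, hx1⟩ := aux_sum_scale _ _ _ _ hhead
  obtain ⟨x2, hx2R, hx2⟩ := aux_sum_scale _ _ _ _ htail
  exact ⟨x1 + x2, add_mem hx1R hx2R, by rw [hx1, hx2]; ring⟩
end

section
/- Let K > 0 be a real number, let p be a nonzero integer, and let m ∈ ℤ. Then the improper integral ∫_{−∞}^{+∞} exp(iπpβ²/(2K)) · ( exp(2πimβ/K) + exp(−2πimβ/K) ) dβ, understood as the limit as R → +∞ of the integrals over [−R, R], exists and equals (8K)^{1/2} · e^{(iπ/4)·sign(p)} · |p|^{−1/2} · exp(−2πi·m²/(p·K)). -/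
open Complex MeasureTheory Filter intervalIntegral Real Set



lemma arith_aux {c T T' : ℝ} (hc : 0 < c) (hT : 0 < T) (hT' : 0 < T') :
    1 / (2 * c * T') + 1 / (2 * c * T) + (2 * c)⁻¹ * (T⁻¹ - T'⁻¹) = 1 / (c * T) := by
  field_simp
  ring

lemma integral_inv_sq_aux {c T T' : ℝ} (hc : 0 < c) (hT : 0 < T) (hTT' : T ≤ T') :
    (∫ x in T..T', 1 / (c * x ^ 2)) = c⁻¹ * (T⁻¹ - T'⁻¹) := by
  have hpos : ∀ x ∈ Set.uIcc T T', (0:ℝ) < x := by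
    intro x hx
    rw [Set.uIcc_of_le hTT'] at hx
    linarith [hx.1]
  have hd : ∀ x ∈ Set.uIcc T T', HasDerivAt (fun x : ℝ => -c⁻¹ * x⁻¹)
      (1 / (c * x ^ 2)) x := by
    intro x hx
    have hx0 : x ≠ 0 := ne_of_gt (hpos x hx)
    have := (hasDerivAt_inv hx0).const_mul (-c⁻¹)
    refine this.congr_deriv ?_
    rw [neg_mul_neg, ← mul_inv, one_div]
  have hcont : IntervalIntegrable (fun x : ℝ => 1 / (c * x ^ 2)) volume T T' := by
    apply ContinuousOn.intervalIntegrable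
    apply ContinuousOn.div continuousOn_const
    · exact (by continuity : Continuous fun x : ℝ => c * x ^ 2).continuousOn
    · intro x hx
      have := hpos x hx
      positivity
  rw [intervalIntegral.integral_eq_sub_of_hasDerivAt hd hcont]
  ring

lemma hasDeriv_g (b : ℂ) (hb : b ≠ 0) {x : ℝ} (hx : x ≠ 0) :
    HasDerivAt (fun x : ℝ => -Complex.exp (-b * x ^ 2) / (2 * b * x))
      (Complex.exp (-b * x ^ 2) + Complex.exp (-b * x ^ 2) / (2 * b * x ^ 2)) x := by
  have hxc : (x : ℂ) ≠ 0 := by exact_mod_cast hx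
  have h1 : HasDerivAt (fun z : ℂ => -Complex.exp (-b * z ^ 2) / (2 * b * z))
      (Complex.exp (-b * x ^ 2) + Complex.exp (-b * x ^ 2) / (2 * b * (x:ℂ) ^ 2)) (x : ℝ) := by
    have hz : HasDerivAt (fun z : ℂ => -b * z ^ 2) (-b * (2 * x)) (x:ℂ) := by
      simpa [mul_comm] using ((hasDerivAt_pow 2 (x:ℂ)).const_mul (-b))
    have he : HasDerivAt (fun z : ℂ => Complex.exp (-b * z ^ 2))
        (Complex.exp (-b * (x:ℂ) ^ 2) * (-b * (2 * x))) (x:ℂ) := by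
      simpa [mul_comm, Function.comp_def] using (Complex.hasDerivAt_exp _).comp _ hz
    have hd : HasDerivAt (fun z : ℂ => 2 * b * z) (2 * b) (x:ℂ) := by
      simpa using (hasDerivAt_id (x:ℂ)).const_mul (2 * b)
    have := he.neg.div hd (by simp [hb, hxc])
    refine this.congr_deriv ?_
    rw [Pi.neg_apply]
    field_simp
    ring
  simpa using h1.comp_ofReal

lemma norm_cexp_le (b : ℂ) (hre : 0 ≤ b.re) (x : ℝ) : ‖Complex.exp (-b * x ^ 2)‖ ≤ 1 := by
  rw [Complex.norm_exp]
  apply Real.exp_le_one_iff.mpr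
  simp only [neg_mul, neg_re, mul_re, Complex.ofReal_pow]
  simp only [← Complex.ofReal_pow, Complex.ofReal_re, Complex.ofReal_im, mul_zero, sub_zero,
    neg_nonpos]
  positivity

set_option maxHeartbeats 1000000 in
lemma tail_bound (b : ℂ) (hre : 0 ≤ b.re) (him : b.im ≠ 0) {T T' : ℝ} (hT : 0 < T)
    (hTT' : T ≤ T') :
    ‖∫ x in T..T', Complex.exp (-b * x ^ 2)‖ ≤ 1 / (|b.im| * T) := by
  have hb : b ≠ 0 := fun h => him (by simp [h])
  have habs : (0:ℝ) < |b.im| := abs_pos.mpr him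
  have hT' : (0:ℝ) < T' := lt_of_lt_of_le hT hTT'
  set g : ℝ → ℂ := fun x => -Complex.exp (-b * x ^ 2) / (2 * b * x) with hg
  have hpos : ∀ x ∈ Set.uIcc T T', (0:ℝ) < x := by
    intro x hx
    rw [Set.uIcc_of_le hTT'] at hx
    linarith [hx.1]
  have hderiv : ∀ x ∈ Set.uIcc T T', HasDerivAt g
      (Complex.exp (-b * x ^ 2) + Complex.exp (-b * x ^ 2) / (2 * b * x ^ 2)) x :=
    fun x hx => hasDeriv_g b hb (ne_of_gt (hpos x hx))
  have hcont1 : IntervalIntegrable (fun x : ℝ => Complex.exp (-b * x ^ 2)) volume T T' := by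
    apply Continuous.intervalIntegrable
    exact Complex.continuous_exp.comp (by continuity)
  have hcont2 : IntervalIntegrable (fun x : ℝ => Complex.exp (-b * x ^ 2) / (2 * b * x ^ 2))
      volume T T' := by
    apply ContinuousOn.intervalIntegrable
    apply ContinuousOn.div
    · exact (Complex.continuous_exp.comp (by continuity)).continuousOn
    · exact (by continuity : Continuous fun x : ℝ => 2 * b * (x:ℂ) ^ 2).continuousOn
    · intro x hx
      have := hpos x hx
      simp only [mul_ne_zero_iff]
      refine ⟨⟨by norm_num, hb⟩, ?_⟩
      exact_mod_cast pow_ne_zero 2 (ne_of_gt this)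
  have key : (∫ x in T..T', (Complex.exp (-b * x ^ 2)
      + Complex.exp (-b * x ^ 2) / (2 * b * x ^ 2))) = g T' - g T :=
    intervalIntegral.integral_eq_sub_of_hasDerivAt hderiv (hcont1.add hcont2)
  have split : (∫ x in T..T', Complex.exp (-b * x ^ 2))
      = g T' - g T - ∫ x in T..T', Complex.exp (-b * x ^ 2) / (2 * b * x ^ 2) := by
    rw [← key, intervalIntegral.integral_add hcont1 hcont2]; ring
  -- pointwise norm bounds
  have hdenom : ∀ x : ℝ, 0 < x → 2 * |b.im| * x ≤ ‖2 * b * (x:ℂ)‖ := by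
    intro x hx
    simp only [norm_mul, Complex.norm_real, Real.norm_eq_abs, abs_of_pos hx,
      Complex.norm_two]
    gcongr
    exact Complex.abs_im_le_norm b
  have hgnorm : ∀ x : ℝ, 0 < x → ‖g x‖ ≤ 1 / (2 * |b.im| * x) := by
    intro x hx
    rw [hg]
    simp only [norm_div, norm_neg]
    exact div_le_div₀ zero_le_one (norm_cexp_le b hre x) (by positivity) (hdenom x hx)
  have hsecond : ∀ x : ℝ, 0 < x →
      ‖Complex.exp (-b * x ^ 2) / (2 * b * x ^ 2)‖ ≤ 1 / (2 * |b.im| * x ^ 2) := by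
    intro x hx
    rw [norm_div]
    apply div_le_div₀ zero_le_one (norm_cexp_le b hre x) (by positivity)
    have := hdenom (x^2) (by positivity)
    calc 2 * |b.im| * x ^ 2 ≤ ‖2 * b * ((x^2 : ℝ) : ℂ)‖ := this
      _ = ‖2 * b * (x:ℂ) ^ 2‖ := by push_cast; ring_nf
  -- integral of the bound
  have hinvsq : (∫ x in T..T', 1 / (2 * |b.im| * x ^ 2))
      = (2 * |b.im|)⁻¹ * (T⁻¹ - T'⁻¹) := integral_inv_sq_aux (by positivity) hT hTT'
  have hnorm2 : ‖∫ x in T..T', Complex.exp (-b * x ^ 2) / (2 * b * x ^ 2)‖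
      ≤ (2 * |b.im|)⁻¹ * (T⁻¹ - T'⁻¹) := by
    have := intervalIntegral.norm_integral_le_of_norm_le
      (f := fun x : ℝ => Complex.exp (-b * x ^ 2) / (2 * b * x ^ 2))
      (g := fun x : ℝ => 1 / (2 * |b.im| * x ^ 2)) (μ := volume) (a := T) (b := T')
      hTT' ?_ ?_
    · rw [hinvsq] at this
      exact this
    · filter_upwards with x hx
      have hx0 : 0 < x := by
        linarith [hx.1]
      exact hsecond x hx0
    · apply ContinuousOn.intervalIntegrable
      apply ContinuousOn.div continuousOn_const
      · exact (by continuity : Continuous fun x : ℝ => 2 * |b.im| * x ^ 2).continuousOn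
      · intro x hx
        have := hpos x hx
        positivity
  calc ‖∫ x in T..T', Complex.exp (-b * x ^ 2)‖
      ≤ ‖g T'‖ + ‖g T‖ + ‖∫ x in T..T', Complex.exp (-b * x ^ 2) / (2 * b * x ^ 2)‖ := by
        rw [split]
        exact (norm_sub_le _ _).trans (add_le_add_left (norm_sub_le _ _) _)
    _ ≤ 1 / (2 * |b.im| * T') + 1 / (2 * |b.im| * T) + (2 * |b.im|)⁻¹ * (T⁻¹ - T'⁻¹) :=
        add_le_add (add_le_add (hgnorm T' hT') (hgnorm T hT)) hnorm2
    _ = 1 / (|b.im| * T) := arith_aux habs hT hT'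



lemma tail_Ioi (b : ℂ) (hre : 0 < b.re) (him : b.im ≠ 0) {R : ℝ} (hR : 0 < R) :
    ‖∫ x in Ioi R, Complex.exp (-b * x ^ 2)‖ ≤ 1 / (|b.im| * R) := by
  have hint : Integrable (fun x : ℝ => Complex.exp (-b * x ^ 2)) := integrable_cexp_neg_mul_sq hre
  have htend := intervalIntegral_tendsto_integral_Ioi R (hint.integrableOn) tendsto_id
  have : Tendsto (fun T' : ℝ => ‖∫ x in R..T', Complex.exp (-b * x ^ 2)‖) atTop
      (nhds ‖∫ x in Ioi R, Complex.exp (-b * x ^ 2)‖) := htend.norm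
  refine le_of_tendsto this ?_
  filter_upwards [eventually_ge_atTop R] with T' hT'
  exact tail_bound b hre.le him hR hT'

lemma tail_Iic (b : ℂ) (hre : 0 < b.re) (him : b.im ≠ 0) {R : ℝ} (hR : 0 < R) :
    ‖∫ x in Iic (-R), Complex.exp (-b * x ^ 2)‖ ≤ 1 / (|b.im| * R) := by
  have : (∫ x in Iic (-R), Complex.exp (-b * x ^ 2))
      = ∫ x in Ioi R, Complex.exp (-b * x ^ 2) := by
    rw [← integral_comp_neg_Ioi]
    congr 1
    ext x
    push_cast
    ring_nf
  rw [this]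
  exact tail_Ioi b hre him hR

lemma gauss_sub_interval (b : ℂ) (hre : 0 < b.re) (him : b.im ≠ 0) {R : ℝ} (hR : 0 < R) :
    ‖(∫ x : ℝ, Complex.exp (-b * x ^ 2)) - ∫ x in (-R)..R, Complex.exp (-b * x ^ 2)‖
      ≤ 2 / (|b.im| * R) := by
  have hint : Integrable (fun x : ℝ => Complex.exp (-b * x ^ 2)) := integrable_cexp_neg_mul_sq hre
  have h1 : (∫ x : ℝ, Complex.exp (-b * x ^ 2))
      = (∫ x in Iic R, Complex.exp (-b * x ^ 2)) + ∫ x in Ioi R, Complex.exp (-b * x ^ 2) :=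
    (integral_Iic_add_Ioi hint.integrableOn hint.integrableOn).symm
  have h2 : (∫ x in (-R)..R, Complex.exp (-b * x ^ 2))
      = (∫ x in Iic R, Complex.exp (-b * x ^ 2)) - ∫ x in Iic (-R), Complex.exp (-b * x ^ 2) :=
    (integral_Iic_sub_Iic hint.integrableOn hint.integrableOn).symm
  rw [h1, h2]
  have : (∫ x in Iic R, Complex.exp (-b * x ^ 2)) + (∫ x in Ioi R, Complex.exp (-b * x ^ 2))
      - ((∫ x in Iic R, Complex.exp (-b * x ^ 2)) - ∫ x in Iic (-R), Complex.exp (-b * x ^ 2))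
      = (∫ x in Ioi R, Complex.exp (-b * x ^ 2)) + ∫ x in Iic (-R), Complex.exp (-b * x ^ 2) := by
    ring
  rw [this]
  calc ‖(∫ x in Ioi R, Complex.exp (-b * x ^ 2)) + ∫ x in Iic (-R), Complex.exp (-b * x ^ 2)‖
      ≤ ‖∫ x in Ioi R, Complex.exp (-b * x ^ 2)‖ + ‖∫ x in Iic (-R), Complex.exp (-b * x ^ 2)‖ :=
        norm_add_le _ _
    _ ≤ 1 / (|b.im| * R) + 1 / (|b.im| * R) :=
        add_le_add (tail_Ioi b hre him hR) (tail_Iic b hre him hR)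
    _ = 2 / (|b.im| * R) := by ring



noncomputable def fresnelLimit (a : ℝ) : ℂ := ((π : ℂ) / (-(Complex.I * a))) ^ (1/2 : ℂ)

lemma fresnel_bound (a : ℝ) (ha : a ≠ 0) {R : ℝ} (hR : 0 < R) :
    ‖(∫ x in (-R)..R, Complex.exp (Complex.I * a * x ^ 2)) - fresnelLimit a‖
      ≤ 2 / (|a| * R) := by
  set l : Filter ℝ := nhdsWithin 0 (Ioi 0) with hl
  have hl_ne : l.NeBot := nhdsGT_neBot 0
  set b : ℝ → ℂ := fun ε => (ε : ℂ) - Complex.I * a with hbdef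
  have hbre : ∀ ε : ℝ, 0 < ε → 0 < (b ε).re := by
    intro ε hε
    simp [hbdef, Complex.sub_re, Complex.mul_re]
    exact hε
  have hbim : ∀ ε : ℝ, (b ε).im = -a := by
    intro ε
    simp [hbdef, Complex.sub_im, Complex.mul_im]
  -- Φ
  have hΦ : Tendsto (fun ε : ℝ => ∫ x in (-R)..R, Complex.exp (-(b ε) * x ^ 2)) l
      (nhds (∫ x in (-R)..R, Complex.exp (Complex.I * a * x ^ 2))) := by
    have := intervalIntegral.tendsto_integral_filter_of_dominated_convergence
      (F := fun (ε : ℝ) (x : ℝ) => Complex.exp (-(b ε) * x ^ 2))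
      (f := fun x : ℝ => Complex.exp (Complex.I * a * x ^ 2))
      (μ := volume) (a := -R) (b := R) (l := l)
      (bound := fun _ => 1) ?_ ?_ ?_ ?_
    · exact this
    · filter_upwards with ε
      apply Continuous.aestronglyMeasurable
      exact Complex.continuous_exp.comp (by continuity)
    · filter_upwards [self_mem_nhdsWithin] with ε (hε : ε ∈ Ioi 0)
      filter_upwards with x _
      rw [Complex.norm_exp]
      apply Real.exp_le_one_iff.mpr
      have : (-(b ε) * (x:ℂ) ^ 2).re = -(b ε).re * x ^ 2 := by
        simp [Complex.mul_re, ← Complex.ofReal_pow]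
      rw [this]
      have := (hbre ε hε).le
      nlinarith [sq_nonneg x]
    · exact intervalIntegrable_const
    · filter_upwards with x _
      have hcont : Continuous (fun ε : ℝ => Complex.exp (-(b ε) * x ^ 2)) := by
        apply Complex.continuous_exp.comp
        continuity
      have h0 : Complex.exp (-(b 0) * x ^ 2) = Complex.exp (Complex.I * a * x ^ 2) := by
        simp [hbdef]
      rw [← h0]
      exact (hcont.tendsto 0).mono_left nhdsWithin_le_nhds
  -- Ψ
  have hΨ : Tendsto (fun ε : ℝ => ((π : ℂ) / b ε) ^ (1/2 : ℂ)) l (nhds (fresnelLimit a)) := by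
    have hb0 : b 0 ≠ 0 := by
      intro h
      have := congrArg Complex.im h
      rw [hbim 0] at this
      simp at this
      exact ha this
    have hcont_b : Continuous b := by continuity
    have h1 : Tendsto (fun ε : ℝ => (π : ℂ) / b ε) l (nhds ((π : ℂ) / b 0)) :=
      ((continuous_const.div hcont_b (fun ε => ?_)).tendsto 0).mono_left nhdsWithin_le_nhds
    rotate_left
    · intro h
      have := congrArg Complex.im h
      rw [hbim ε] at this
      simp at this
      exact ha this
    have hslit : (π : ℂ) / b 0 ∈ Complex.slitPlane := by
      apply Complex.mem_slitPlane_iff.mpr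
      right
      simp only [Complex.div_im]
      rw [hbim 0]
      have hre : (b 0).re = 0 := by simp [hbdef]
      rw [hre]
      simp [Complex.ofReal_im, Complex.ofReal_re]
      exact ⟨ha, hb0⟩
    have hcpow : ContinuousAt (fun z : ℂ => z ^ (1/2 : ℂ)) ((π:ℂ) / b 0) :=
      continuousAt_cpow_const hslit
    have : fresnelLimit a = ((π : ℂ) / b 0) ^ (1/2 : ℂ) := by
      simp [fresnelLimit, hbdef]
    rw [this]
    exact hcpow.tendsto.comp h1
  -- the eventual bound
  have hbound : ∀ᶠ ε in l, ‖(∫ x in (-R)..R, Complex.exp (-(b ε) * x ^ 2))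
      - ((π : ℂ) / b ε) ^ (1/2 : ℂ)‖ ≤ 2 / (|a| * R) := by
    filter_upwards [self_mem_nhdsWithin] with ε (hε : ε ∈ Ioi 0)
    have hre := hbre ε hε
    have him : (b ε).im ≠ 0 := by rw [hbim]; simpa using ha
    have hgauss : (∫ x : ℝ, Complex.exp (-(b ε) * x ^ 2)) = ((π : ℂ) / b ε) ^ (1/2 : ℂ) :=
      integral_gaussian_complex hre
    have := gauss_sub_interval (b ε) hre him hR
    rw [hgauss, hbim] at this
    rw [abs_neg] at this
    rwa [norm_sub_rev] at this
  -- conclude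
  have htend : Tendsto (fun ε : ℝ => ‖(∫ x in (-R)..R, Complex.exp (-(b ε) * x ^ 2))
      - ((π : ℂ) / b ε) ^ (1/2 : ℂ)‖) l
      (nhds ‖(∫ x in (-R)..R, Complex.exp (Complex.I * a * x ^ 2)) - fresnelLimit a‖) :=
    (hΦ.sub hΨ).norm
  exact le_of_tendsto htend hbound




lemma fresnel_integrable (a : ℝ) (c d : ℝ) :
    IntervalIntegrable (fun x : ℝ => Complex.exp (Complex.I * a * x ^ 2)) volume c d :=
  (Complex.continuous_exp.comp (by continuity)).intervalIntegrable c d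

lemma fresnel_even (a : ℝ) (T : ℝ) :
    (∫ x in (0:ℝ)..T, Complex.exp (Complex.I * a * x ^ 2))
      = - ∫ x in (0:ℝ)..(-T), Complex.exp (Complex.I * a * x ^ 2) := by
  have h := intervalIntegral.integral_comp_neg
    (a := -T) (b := (0:ℝ)) (fun x : ℝ => Complex.exp (Complex.I * a * x ^ 2))
  have heven : ∀ x : ℝ, Complex.exp (Complex.I * a * ((-x : ℝ) : ℂ) ^ 2)
      = Complex.exp (Complex.I * a * (x : ℂ) ^ 2) := by
    intro x; push_cast; ring_nf
  simp only [heven, neg_zero, neg_neg] at h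
  rw [← h, intervalIntegral.integral_symm]

lemma fresnel_F_tendsto (a : ℝ) (ha : a ≠ 0) :
    Tendsto (fun T : ℝ => ∫ x in (0:ℝ)..T, Complex.exp (Complex.I * a * x ^ 2)) atTop
      (nhds (fresnelLimit a / 2)) := by
  rw [tendsto_iff_norm_sub_tendsto_zero]
  refine squeeze_zero_norm' (a := fun T : ℝ => 1 / (|a| * T)) ?_ ?_
  · filter_upwards [eventually_gt_atTop (0:ℝ)] with T hT
    set FT := ∫ x in (0:ℝ)..T, Complex.exp (Complex.I * a * x ^ 2) with hFT
    have hsplit : (∫ x in (-T)..T, Complex.exp (Complex.I * a * x ^ 2))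
        = 2 * ∫ x in (0:ℝ)..T, Complex.exp (Complex.I * a * x ^ 2) := by
      rw [← intervalIntegral.integral_add_adjacent_intervals (b := (0:ℝ))
        (fresnel_integrable a _ _) (fresnel_integrable a _ _)]
      have : (∫ x in (-T)..(0:ℝ), Complex.exp (Complex.I * a * x ^ 2))
          = ∫ x in (0:ℝ)..T, Complex.exp (Complex.I * a * x ^ 2) := by
        rw [fresnel_even a T]
        rw [intervalIntegral.integral_symm]
      rw [this]; ring
    have hb := fresnel_bound a ha hT
    rw [hsplit] at hb
    rw [norm_norm]
    calc ‖FT - fresnelLimit a / 2‖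
        = ‖2 * FT - fresnelLimit a‖ / 2 := by
          rw [show (2:ℂ) * FT - fresnelLimit a = 2 * (FT - fresnelLimit a / 2) from by ring,
            norm_mul]
          have h2 : ‖(2:ℂ)‖ = 2 := by norm_num
          rw [h2]
          ring
      _ ≤ (2 / (|a| * T)) / 2 := by gcongr
      _ = 1 / (|a| * T) := by ring
  · have h1 : Tendsto (fun T : ℝ => |a| * T) atTop atTop :=
      tendsto_id.const_mul_atTop (abs_pos.mpr ha)
    have h2 : Tendsto (fun T : ℝ => (|a| * T)⁻¹) atTop (nhds 0) := h1.inv_tendsto_atTop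
    simpa [one_div] using h2

lemma fresnel_tendsto (a : ℝ) (ha : a ≠ 0) {u v : ℝ → ℝ}
    (hu : Tendsto u atTop atBot) (hv : Tendsto v atTop atTop) :
    Tendsto (fun R : ℝ => ∫ x in (u R)..(v R), Complex.exp (Complex.I * a * x ^ 2)) atTop
      (nhds (fresnelLimit a)) := by
  have key : ∀ R : ℝ, (∫ x in (u R)..(v R), Complex.exp (Complex.I * a * x ^ 2))
      = (∫ x in (0:ℝ)..(v R), Complex.exp (Complex.I * a * x ^ 2))
        + ∫ x in (0:ℝ)..(-(u R)), Complex.exp (Complex.I * a * x ^ 2) := by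
    intro R
    rw [← intervalIntegral.integral_interval_sub_left (fresnel_integrable a 0 (v R))
      (fresnel_integrable a 0 (u R))]
    rw [fresnel_even a (u R)]
    ring_nf
  simp only [key]
  have h1 := (fresnel_F_tendsto a ha).comp hv
  have h2 := (fresnel_F_tendsto a ha).comp (tendsto_neg_atBot_atTop.comp hu)
  have := h1.add h2
  simp only [Function.comp] at this ⊢
  convert this using 2
  ring


lemma cpow_half_I {t : ℝ} (ht : 0 < t) (s : ℝ) (hs : s = 1 ∨ s = -1) :
    ((t:ℂ) * (s * Complex.I)) ^ (1/2:ℂ)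
      = (Real.sqrt t : ℂ) * Complex.exp (Complex.I * (π/4) * s) := by
  have htc : ((t:ℂ) * (s * Complex.I)) ≠ 0 := by
    rcases hs with h | h <;> simp [h, Complex.ext_iff] <;> exact ne_of_gt ht
  rw [Complex.cpow_def_of_ne_zero htc]
  have hlog : Complex.log ((t:ℂ) * (s * Complex.I)) = (Real.log t : ℂ) + (s * (π/2)) * Complex.I := by
    apply Complex.ext
    · rw [Complex.log_re]
      rcases hs with h | h <;>
        simp [h, map_mul, Complex.norm_real, abs_of_pos ht]
    · rw [Complex.log_im]
      rcases hs with h | h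
      · simp only [h, Complex.ofReal_one, one_mul]
        rw [Complex.arg_real_mul _ ht, Complex.arg_I]
        simp
      · simp only [h]
        push_cast
        rw [show ((-1 : ℂ)) * Complex.I = -Complex.I by ring]
        rw [Complex.arg_real_mul _ ht, Complex.arg_neg_I]
        simp
  rw [hlog]
  rw [show ((Real.log t : ℂ) + (s * (π/2)) * Complex.I) * (1/2)
      = (Real.log t / 2 : ℝ) + Complex.I * (π/4) * s by push_cast; ring]
  rw [Complex.exp_add]
  congr 1
  rw [← Complex.ofReal_exp]
  congr 1
  rw [Real.sqrt_eq_rpow, Real.rpow_def_of_pos ht]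
  ring_nf


lemma fresnelLimit_eq (a : ℝ) (ha : a ≠ 0) :
    fresnelLimit a = (Real.sqrt (π / |a|) : ℂ)
      * Complex.exp (Complex.I * (π/4) * Real.sign a) := by
  have hpi := Real.pi_pos
  have ht : 0 < π / |a| := by positivity
  have hden : -(Complex.I * (a:ℂ)) ≠ 0 := by
    simp [Complex.I_ne_zero, ha]
  have haC : (a : ℂ) ≠ 0 := Complex.ofReal_ne_zero.mpr ha
  rw [fresnelLimit]
  rcases lt_or_gt_of_ne ha with hneg | hpos
  · have hac : ((|a| : ℝ) : ℂ) = -(a : ℂ) := by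
      rw [abs_of_neg hneg]; push_cast; ring
    have hz : (π : ℂ) / (-(Complex.I * a)) = ((π / |a| : ℝ) : ℂ) * ((-1 : ℝ) * Complex.I) := by
      rw [div_eq_iff hden]
      push_cast [Complex.ofReal_div]
      rw [hac]
      field_simp
      linear_combination Complex.I_mul_I
    rw [hz, cpow_half_I ht (-1) (Or.inr rfl)]
    rw [Real.sign_of_neg hneg]
  · have hac : ((|a| : ℝ) : ℂ) = (a : ℂ) := by
      rw [abs_of_pos hpos]
    have hz : (π : ℂ) / (-(Complex.I * a)) = ((π / |a| : ℝ) : ℂ) * ((1 : ℝ) * Complex.I) := by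
      rw [div_eq_iff hden]
      push_cast [Complex.ofReal_div]
      rw [hac]
      field_simp
      linear_combination Complex.I_mul_I
    rw [hz, cpow_half_I ht 1 (Or.inl rfl)]
    rw [Real.sign_of_pos hpos]

set_option maxHeartbeats 2000000 in
/-- For `K > 0` real, `p` a nonzero integer and `m ∈ ℤ`, the improper integral
`∫_{−∞}^{+∞} exp(iπpβ²/(2K)) (exp(2πimβ/K) + exp(−2πimβ/K)) dβ`, understood as
the limit of `∫_{−R}^{R}` as `R → +∞`, exists and equals
`(8K)^{1/2} e^{(iπ/4)sign(p)} |p|^{−1/2} exp(−2πim²/(pK))`. -/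
theorem stmt6 (K : ℝ) (hK : 0 < K) (p : ℤ) (hp : p ≠ 0) (m : ℤ) :
    Filter.Tendsto
      (fun R : ℝ => ∫ β in (-R)..R,
        Complex.exp (Real.pi * Complex.I * (p : ℂ) * (β : ℂ) ^ 2 / (2 * (K : ℂ)))
          * (Complex.exp (2 * Real.pi * Complex.I * (m : ℂ) * (β : ℂ) / (K : ℂ))
            + Complex.exp (-(2 * Real.pi * Complex.I * (m : ℂ) * (β : ℂ) / (K : ℂ)))))
      Filter.atTop
      (nhds ((Real.sqrt (8 * K) : ℂ)
        * Complex.exp (Real.pi * Complex.I / 4 * (p.sign : ℂ))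
        * (Real.sqrt |(p : ℝ)| : ℂ)⁻¹
        * Complex.exp (-(2 * Real.pi * Complex.I * (m : ℂ) ^ 2 / ((p : ℂ) * (K : ℂ)))))) := by
  have hKne : (K : ℂ) ≠ 0 := Complex.ofReal_ne_zero.mpr (ne_of_gt hK)
  have hpR : ((p : ℝ)) ≠ 0 := Int.cast_ne_zero.mpr hp
  have hpC : ((p : ℂ)) ≠ 0 := Int.cast_ne_zero.mpr hp
  have hpi := Real.pi_pos
  set a : ℝ := π * (p : ℝ) / (2 * K) with hadef
  set c : ℝ := 2 * (m : ℝ) / (p : ℝ) with hcdef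
  have ha : a ≠ 0 := by
    rw [hadef]
    apply div_ne_zero (mul_ne_zero (ne_of_gt hpi) hpR) (by positivity)
  set E : ℂ := Complex.exp (-(2 * Real.pi * Complex.I * (m : ℂ) ^ 2 / ((p : ℂ) * (K : ℂ)))) with hEdef
  set f : ℝ → ℂ := fun x => Complex.exp (Complex.I * a * x ^ 2) with hfdef
  have haC : (a : ℂ) = (π : ℂ) * (p : ℂ) / (2 * (K : ℂ)) := by rw [hadef]; push_cast; ring
  have hcC : (c : ℂ) = 2 * (m : ℂ) / (p : ℂ) := by rw [hcdef]; push_cast; ring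
  -- pointwise identity
  have key : ∀ β : ℝ,
      Complex.exp (Real.pi * Complex.I * (p : ℂ) * (β : ℂ) ^ 2 / (2 * (K : ℂ)))
        * (Complex.exp (2 * Real.pi * Complex.I * (m : ℂ) * (β : ℂ) / (K : ℂ))
          + Complex.exp (-(2 * Real.pi * Complex.I * (m : ℂ) * (β : ℂ) / (K : ℂ))))
      = E * (f (β + c) + f (β - c)) := by
    intro β
    have e1 : Real.pi * Complex.I * (p : ℂ) * (β : ℂ) ^ 2 / (2 * (K : ℂ))
        + 2 * Real.pi * Complex.I * (m : ℂ) * (β : ℂ) / (K : ℂ)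
        = -(2 * Real.pi * Complex.I * (m : ℂ) ^ 2 / ((p : ℂ) * (K : ℂ)))
          + Complex.I * (a : ℂ) * (((β + c : ℝ) : ℂ)) ^ 2 := by
      rw [haC]
      push_cast
      rw [hcC]
      field_simp
      ring
    have e2 : Real.pi * Complex.I * (p : ℂ) * (β : ℂ) ^ 2 / (2 * (K : ℂ))
        + -(2 * Real.pi * Complex.I * (m : ℂ) * (β : ℂ) / (K : ℂ))
        = -(2 * Real.pi * Complex.I * (m : ℂ) ^ 2 / ((p : ℂ) * (K : ℂ)))
          + Complex.I * (a : ℂ) * (((β - c : ℝ) : ℂ)) ^ 2 := by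
      rw [haC]
      push_cast
      rw [hcC]
      field_simp
      ring
    rw [mul_add, ← Complex.exp_add, ← Complex.exp_add, e1, e2, Complex.exp_add, Complex.exp_add,
      hEdef, hfdef, ← mul_add]
  -- rewrite integrals
  have hint : ∀ R : ℝ,
      (∫ β in (-R)..R,
        Complex.exp (Real.pi * Complex.I * (p : ℂ) * (β : ℂ) ^ 2 / (2 * (K : ℂ)))
          * (Complex.exp (2 * Real.pi * Complex.I * (m : ℂ) * (β : ℂ) / (K : ℂ))
            + Complex.exp (-(2 * Real.pi * Complex.I * (m : ℂ) * (β : ℂ) / (K : ℂ)))))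
      = E * ((∫ x in (-R + c)..(R + c), f x) + ∫ x in (-R - c)..(R - c), f x) := by
    intro R
    have hcongr : (∫ β in (-R)..R,
        Complex.exp (Real.pi * Complex.I * (p : ℂ) * (β : ℂ) ^ 2 / (2 * (K : ℂ)))
          * (Complex.exp (2 * Real.pi * Complex.I * (m : ℂ) * (β : ℂ) / (K : ℂ))
            + Complex.exp (-(2 * Real.pi * Complex.I * (m : ℂ) * (β : ℂ) / (K : ℂ)))))
        = ∫ β in (-R)..R, E * (f (β + c) + f (β - c)) := by
      apply intervalIntegral.integral_congr
      intro β _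
      exact key β
    rw [hcongr]
    rw [intervalIntegral.integral_const_mul]
    congr 1
    have hi1 : IntervalIntegrable (fun β : ℝ => f (β + c)) volume (-R) R := by
      apply Continuous.intervalIntegrable
      rw [hfdef]
      exact Complex.continuous_exp.comp (by continuity)
    have hi2 : IntervalIntegrable (fun β : ℝ => f (β - c)) volume (-R) R := by
      apply Continuous.intervalIntegrable
      rw [hfdef]
      exact Complex.continuous_exp.comp (by continuity)
    rw [intervalIntegral.integral_add hi1 hi2]
    congr 1
    · exact intervalIntegral.integral_comp_add_right f c
    · exact intervalIntegral.integral_comp_sub_right f c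
  simp only [hint]
  -- the limit
  have h1 : Tendsto (fun R : ℝ => ∫ x in (-R + c)..(R + c), f x) atTop
      (nhds (fresnelLimit a)) := by
    apply fresnel_tendsto a ha
    · exact tendsto_atBot_add_const_right atTop c tendsto_neg_atTop_atBot
    · exact tendsto_atTop_add_const_right atTop c tendsto_id
  have h2 : Tendsto (fun R : ℝ => ∫ x in (-R - c)..(R - c), f x) atTop
      (nhds (fresnelLimit a)) := by
    apply fresnel_tendsto a ha
    · exact tendsto_atBot_add_const_right atTop (-c) tendsto_neg_atTop_atBot
    · exact tendsto_atTop_add_const_right atTop (-c) tendsto_id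
  have htend := ((h1.add h2).const_mul E)
  convert htend using 2
  -- value identity
  have hsign : Real.sign a = (p.sign : ℝ) := by
    rcases lt_or_gt_of_ne hp with hneg | hpos
    · have hco : a < 0 := by
        rw [hadef]
        apply div_neg_of_neg_of_pos _ (by positivity)
        have : (p : ℝ) < 0 := by exact_mod_cast hneg
        nlinarith
      rw [Real.sign_of_neg hco, Int.sign_eq_neg_one_of_neg hneg]
      norm_num
    · have hco : 0 < a := by
        rw [hadef]
        apply div_pos _ (by positivity)
        have : (0:ℝ) < (p : ℝ) := by exact_mod_cast hpos
        nlinarith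
      rw [Real.sign_of_pos hco, Int.sign_eq_one_of_pos hpos]
      norm_num
  have habsa : |a| = π * |(p:ℝ)| / (2 * K) := by
    rw [hadef, abs_div, abs_mul, abs_of_pos hpi, abs_of_pos (by positivity : (0:ℝ) < 2 * K)]
  have hdiv : π / |a| = 2 * K / |(p:ℝ)| := by
    rw [habsa]
    have hpabs : (0:ℝ) < |(p:ℝ)| := abs_pos.mpr hpR
    field_simp
  rw [fresnelLimit_eq a ha, hsign, hdiv]
  have hsqrt : Real.sqrt (2 * K / |(p:ℝ)|) = Real.sqrt (2 * K) / Real.sqrt |(p:ℝ)| :=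
    Real.sqrt_div (by positivity) _
  have hsqrt8 : Real.sqrt (8 * K) = 2 * Real.sqrt (2 * K) := by
    rw [show (8:ℝ) * K = 2^2 * (2 * K) by ring, Real.sqrt_mul (by positivity),
      Real.sqrt_sq (by norm_num : (0:ℝ) ≤ 2)]
  rw [hsqrt, hsqrt8]
  have hexparg : Real.pi * Complex.I / 4 * (p.sign : ℂ)
      = Complex.I * ((π : ℂ) / 4) * ((p.sign : ℝ) : ℂ) := by
    push_cast
    ring
  rw [hexparg]
  push_cast
  ring
end

section
/- Let K be a prime, ζ = exp(2πi/K), and let f ∈ ℤ[q,q⁻¹] be a Laurent polynomial with integer coefficients, with a₀, a₁, a₂, … ∈ ℤ the coefficients of the power-series expansion of f(1+h) in ℤ[[h]]. Then for every N₀ ≥ 0 and every integer N with N + 1 ≥ (N₀+1)(K−1), one has f(ζ) − Σ_{n=0}^{N} aₙ·(ζ−1)ⁿ ∈ K^{N₀+1}·ℤ[ζ]. (In other words, the series Σₙ aₙ(ζ−1)ⁿ converges K-adically to f(ζ) in ℤ[ζ].) -/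
open Polynomial in
lemma aux_aeval_mem (ζ : ℂ) (r : Polynomial ℤ) :
    Polynomial.aeval ζ r ∈ Subring.closure {ζ} := by
  induction r using Polynomial.induction_on with
  | C a => simpa using intCast_mem (Subring.closure {ζ}) a
  | add p q hp hq => simpa [map_add] using Subring.add_mem _ hp hq
  | monomial n a h =>
      have : (Polynomial.aeval ζ) (C a * X ^ (n + 1)) =
          (Polynomial.aeval ζ) (C a * X ^ n) * ζ := by
        simp [pow_succ, mul_assoc]
      rw [this]
      exact Subring.mul_mem _ h (Subring.subset_closure rfl)

open Polynomial in
lemma aux_zeta_pow (K : ℕ) (hK : K.Prime) (ζ : ℂ) (hprim : IsPrimitiveRoot ζ K) :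
    ∃ x ∈ Subring.closure {ζ}, (ζ - 1) ^ (K - 1) = (K : ℂ) * x := by
  haveI : Fact K.Prime := ⟨hK⟩
  set P₀ : Polynomial ℤ := (∑ i ∈ Finset.range K, X ^ i) - (X - 1) ^ (K - 1) with hP₀
  have hmap : P₀.map (Int.castRingHom (ZMod K)) = 0 := by
    have h1 : ((∑ i ∈ Finset.range K, (X : Polynomial (ZMod K)) ^ i)) * (X - 1)
        = (X - 1) ^ (K - 1) * (X - 1) := by
      rw [geom_sum_mul, ← pow_succ, Nat.sub_add_cancel hK.one_lt.le]
      rw [← one_pow K, ← sub_pow_char (X : Polynomial (ZMod K)) 1, one_pow]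
    have hX1 : (X - 1 : Polynomial (ZMod K)) ≠ 0 := by
      have := Polynomial.X_sub_C_ne_zero (R := ZMod K) 1
      simpa using this
    have h2 := mul_right_cancel₀ hX1 h1
    simp [hP₀, Polynomial.map_sub, Polynomial.map_sum, Polynomial.map_pow, h2]
  have hdvd : Polynomial.C (K : ℤ) ∣ P₀ := by
    rw [Polynomial.C_dvd_iff_dvd_coeff]
    intro i
    have := congrArg (fun p => Polynomial.coeff p i) hmap
    simp only [Polynomial.coeff_map, Polynomial.coeff_zero] at this
    exact_mod_cast (ZMod.intCast_zmod_eq_zero_iff_dvd _ _).1 (by exact_mod_cast this)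
  obtain ⟨g, hg⟩ := hdvd
  refine ⟨-(Polynomial.aeval ζ g), Subring.neg_mem _ (aux_aeval_mem ζ g), ?_⟩
  have := congrArg (Polynomial.aeval ζ) hg
  simp only [hP₀, map_sub, map_sum, map_pow, map_mul, aeval_X, map_one, aeval_C] at this
  have hsum : (∑ i ∈ Finset.range K, ζ ^ i) = 0 := hprim.geom_sum_eq_zero hK.one_lt
  rw [hsum] at this
  have : (ζ - 1) ^ (K - 1) = -(algebraMap ℤ ℂ (K : ℤ) * (Polynomial.aeval ζ) g) := by
    linear_combination -this
  rw [this]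
  push_cast
  ring

open LaurentPolynomial in
/-- Let `K` be a prime, `ζ = exp(2πi/K)`, `f ∈ ℤ[q,q⁻¹]`, and let
`a₀, a₁, …` be the coefficients of the power-series expansion of `f(1+h)` in
`ℤ[[h]]` (via the unique ring homomorphism `φ : ℤ[q,q⁻¹] → ℤ[[h]]` with
`φ(q) = 1+h`; evaluation at `ζ` is the unique ring homomorphism
`ev : ℤ[q,q⁻¹] → ℂ` with `ev(q) = ζ`).  Then for every `N₀ ≥ 0` and every `N`
with `N + 1 ≥ (N₀+1)(K−1)`, one has
`f(ζ) − ∑_{n=0}^{N} aₙ(ζ−1)ⁿ ∈ K^{N₀+1}·ℤ[ζ]`, i.e. the series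
`∑ₙ aₙ(ζ−1)ⁿ` converges `K`-adically to `f(ζ)` in `ℤ[ζ]`. -/
theorem stmt14 (K : ℕ) (hK : K.Prime)
    (ζ : ℂ) (hζ : ζ = Complex.exp (2 * Real.pi * Complex.I / K))
    (f : LaurentPolynomial ℤ)
    (φ : LaurentPolynomial ℤ →+* PowerSeries ℤ) (hφ : φ (T 1) = 1 + PowerSeries.X)
    (a : ℕ → ℤ) (ha : ∀ k : ℕ, PowerSeries.coeff (R := ℤ) k (φ f) = a k)
    (ev : LaurentPolynomial ℤ →+* ℂ) (hev : ev (T 1) = ζ)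
    (N₀ N : ℕ) (hN : (N₀ + 1) * (K - 1) ≤ N + 1) :
    ∃ x ∈ Subring.closure {ζ},
      ev f - ∑ n ∈ Finset.range (N + 1), (a n : ℂ) * (ζ - 1) ^ n
        = (K : ℂ) ^ (N₀ + 1) * x := by
  classical
  have hprim : IsPrimitiveRoot ζ K := hζ ▸ Complex.isPrimitiveRoot_exp K hK.ne_zero
  obtain ⟨x₀, hx₀mem, hx₀⟩ := aux_zeta_pow K hK ζ hprim
  obtain ⟨m, p, hp⟩ := f.exists_T_pow
  set S_L : LaurentPolynomial ℤ :=
    ∑ n ∈ Finset.range (N + 1), ((a n : LaurentPolynomial ℤ)) * (T 1 - 1) ^ n with hSL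
  set gN : LaurentPolynomial ℤ := f - S_L with hgN
  set S_X : Polynomial ℤ :=
    ∑ n ∈ Finset.range (N + 1), ((a n : Polynomial ℤ)) * (Polynomial.X - 1) ^ n with hSX
  set P : Polynomial ℤ := p - S_X * Polynomial.X ^ m with hPdef
  have hTm : (T (m : ℤ) : LaurentPolynomial ℤ) = (T 1) ^ m := by
    rw [T_pow, mul_one]
  have hSXL : Polynomial.toLaurent S_X = S_L := by
    rw [hSX, hSL, map_sum]
    refine Finset.sum_congr rfl fun n _ => ?_
    rw [map_mul, map_intCast, map_pow, map_sub, Polynomial.toLaurent_X, map_one]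
  have hPL : Polynomial.toLaurent P = gN * T m := by
    rw [hPdef, map_sub, map_mul, hSXL, Polynomial.toLaurent_X_pow, hp, hgN, sub_mul]
  -- power series side
  have hψ : φ.comp Polynomial.toLaurent =
      Polynomial.coeToPowerSeries.ringHom.comp
        (Polynomial.eval₂RingHom Polynomial.C (Polynomial.X + 1)) := by
    apply Polynomial.ringHom_ext
    · intro b
      simp [Polynomial.C_eq_intCast, map_intCast]
    · simp only [RingHom.comp_apply, Polynomial.toLaurent_X, hφ,
        Polynomial.coe_eval₂RingHom, Polynomial.eval₂_X]
      rw [Polynomial.coeToPowerSeries.ringHom_apply, Polynomial.coe_add, Polynomial.coe_X, Polynomial.coe_one, add_comm]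
  have hφP : φ (Polynomial.toLaurent P)
      = ((P.comp (Polynomial.X + 1) : Polynomial ℤ) : PowerSeries ℤ) := by
    have h := RingHom.congr_fun hψ P
    simp only [RingHom.comp_apply, Polynomial.coe_eval₂RingHom,
      Polynomial.coeToPowerSeries.ringHom_apply] at h
    rw [h]; rfl
  have hφS : φ S_L = ∑ n ∈ Finset.range (N + 1),
      (PowerSeries.C (R := ℤ) (a n)) * PowerSeries.X ^ n := by
    rw [hSL, map_sum]
    refine Finset.sum_congr rfl fun n _ => ?_
    rw [map_mul, map_intCast, map_pow, map_sub, hφ, map_one, add_sub_cancel_left,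
      eq_intCast (PowerSeries.C (R := ℤ))]
  have hcoeff : ∀ k, k < N + 1 → PowerSeries.coeff (R := ℤ) k (φ gN) = 0 := by
    intro k hk
    rw [hgN, map_sub, map_sub, ha k, hφS, map_sum]
    have : ∀ n ∈ Finset.range (N + 1),
        PowerSeries.coeff (R := ℤ) k (PowerSeries.C (R := ℤ) (a n) * PowerSeries.X ^ n)
          = if k = n then a n else 0 := by
      intro n _
      rw [PowerSeries.coeff_C_mul, PowerSeries.coeff_X_pow]
      simp
    rw [Finset.sum_congr rfl this, Finset.sum_ite_eq, if_pos (Finset.mem_range.2 hk), sub_self]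
  have hdvd2 : (PowerSeries.X : PowerSeries ℤ) ^ (N + 1)
      ∣ ((P.comp (Polynomial.X + 1) : Polynomial ℤ) : PowerSeries ℤ) := by
    rw [← hφP, hPL, map_mul]
    exact (PowerSeries.X_pow_dvd_iff.2 hcoeff).mul_right _
  have hdvd3 : (Polynomial.X : Polynomial ℤ) ^ (N + 1) ∣ P.comp (Polynomial.X + 1) := by
    rw [Polynomial.X_pow_dvd_iff]
    intro d hd
    have h := PowerSeries.X_pow_dvd_iff.1 hdvd2 d hd
    rwa [Polynomial.coeff_coe] at h
  obtain ⟨w, hw⟩ := hdvd3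
  have hPfac : P = (Polynomial.X - 1) ^ (N + 1) * w.comp (Polynomial.X - 1) := by
    have h1 : P = (P.comp (Polynomial.X + 1)).comp (Polynomial.X - 1) := by
      rw [Polynomial.comp_assoc]
      simp [Polynomial.add_comp, Polynomial.X_comp, Polynomial.one_comp, sub_add_cancel]
    rw [h1, hw, Polynomial.mul_comp, Polynomial.pow_comp, Polynomial.X_comp]
  -- evaluation side
  have hevHom : ev.comp Polynomial.toLaurent = (Polynomial.aeval ζ).toRingHom := by
    apply Polynomial.ringHom_ext
    · intro b
      simp [Polynomial.C_eq_intCast, map_intCast]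
    · simp [Polynomial.toLaurent_X, hev]
  have hevP : ev (Polynomial.toLaurent P) = Polynomial.aeval ζ P := RingHom.congr_fun hevHom P
  have hζK : ζ ^ K = 1 := hprim.pow_eq_one
  have hevTm : ev (T (m : ℤ)) = ζ ^ m := by rw [hTm, map_pow, hev]
  have h1 : ev gN * ζ ^ m = Polynomial.aeval ζ P := by
    rw [← hevTm, ← map_mul, ← hPL, hevP]
  have h2 : ζ ^ m * ζ ^ (m * (K - 1)) = 1 := by
    have hKs : K - 1 + 1 = K := Nat.sub_add_cancel hK.one_lt.le
    calc ζ ^ m * ζ ^ (m * (K - 1)) = ζ ^ (m * (K - 1) + m) := by rw [← pow_add, add_comm]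
      _ = ζ ^ (m * (K - 1 + 1)) := by rw [Nat.mul_succ]
      _ = (ζ ^ K) ^ m := by rw [hKs, pow_mul']
      _ = 1 := by rw [hζK, one_pow]
  have hgNval : ev gN = Polynomial.aeval ζ P * ζ ^ (m * (K - 1)) := by
    calc ev gN = ev gN * (ζ ^ m * ζ ^ (m * (K - 1))) := by rw [h2, mul_one]
      _ = (ev gN * ζ ^ m) * ζ ^ (m * (K - 1)) := by ring
      _ = _ := by rw [h1]
  have haevalP : Polynomial.aeval ζ P
      = (ζ - 1) ^ (N + 1) * Polynomial.aeval ζ (w.comp (Polynomial.X - 1)) := by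
    rw [hPfac, map_mul, map_pow, map_sub, Polynomial.aeval_X, map_one]
  have hsum : ev S_L = ∑ n ∈ Finset.range (N + 1), (a n : ℂ) * (ζ - 1) ^ n := by
    rw [hSL, map_sum]
    refine Finset.sum_congr rfl fun n _ => ?_
    rw [map_mul, map_intCast, map_pow, map_sub, hev, map_one]
  set r : ℕ := N + 1 - (N₀ + 1) * (K - 1) with hr
  have hNsplit : (N₀ + 1) * (K - 1) + r = N + 1 := Nat.add_sub_cancel' hN
  refine ⟨x₀ ^ (N₀ + 1) * (ζ - 1) ^ r
      * Polynomial.aeval ζ (w.comp (Polynomial.X - 1)) * ζ ^ (m * (K - 1)), ?_, ?_⟩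
  · have hζmem : ζ ∈ Subring.closure {ζ} := Subring.subset_closure rfl
    exact Subring.mul_mem _
      (Subring.mul_mem _
        (Subring.mul_mem _ (Subring.pow_mem _ hx₀mem _)
          (Subring.pow_mem _ (Subring.sub_mem _ hζmem (Subring.one_mem _)) _))
        (aux_aeval_mem ζ _))
      (Subring.pow_mem _ hζmem _)
  · have hpowsplit : (ζ - 1) ^ (N + 1)
        = (K : ℂ) ^ (N₀ + 1) * (x₀ ^ (N₀ + 1) * (ζ - 1) ^ r) := by
      rw [← hNsplit, pow_add, pow_mul', hx₀, mul_pow]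
      ring
    have hlhs : ev f - ∑ n ∈ Finset.range (N + 1), (a n : ℂ) * (ζ - 1) ^ n = ev gN := by
      rw [hgN, map_sub, hsum]
    rw [hlhs, hgNval, haevalP, hpowsplit]
    ring
end
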